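/- Let n ≤ 6 and let H : Fin n → Fin n → Fin n → Fin n → Fin n → Fin n → ℝ (representing the mixed components H_{abc}^{def} of a double three-form) be totally antisymmetric in its first three arguments, totally antisymmetric in its last three arguments, and trace-free, i.e. ∀ a b d e, ∑ i, H a b i d e i = 0. Then for all j, k in Fin n: ∑_{a,b,d,e,f} H a b k d e f * H d e f a b j = δ j k * (1/6) * ∑_{a,b,c,d,e,f} H a b c d e f * H d e f a b c. (This is Lovelock's identity H_{abk}^{def} H_{def}^{abj} = (1/6) δ^j_k H_{abc}^{def} H_{def}^{abc} for trace-free double three-forms in six dimensions and lower.) -/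

import Mathlib

noncomputable section

open Finset Equiv Sum

namespace LovelockAux

abbrev ii : Type := Fin 1 ⊕ Fin 3 ⊕ Fin 3

def rot2 : Perm (Fin 3) := ⟨![2,0,1], ![1,2,0], by decide, by decide⟩
def sw12 : Perm (Fin 3) := Equiv.swap 1 2

lemma vec_eta {X : Type*} (v : Fin 3 → X) : ![v 0, v 1, v 2] = v := by
  funext t; fin_cases t <;> rfl

lemma sq_unit (u : ℤˣ) : ((u : ℤ) : ℝ) * ((u : ℤ) : ℝ) = 1 := by
  rcases Int.units_eq_one_or u with h | h <;> simp [h]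

-- resolve a product of deltas against a pi-type sum

lemma delta_pi {n : ℕ} (c : Fin 3 → Fin n) (F : (Fin 3 → Fin n) → ℝ) :
    ∑ r : Fin 3 → Fin n, (∏ t : Fin 3, if c t = r t then (1:ℝ) else 0) * F r = F c := by
  have h1 : ∀ r : Fin 3 → Fin n,
      (∏ t : Fin 3, if c t = r t then (1:ℝ) else 0) = if r = c then 1 else 0 := by
    intro r
    by_cases h : r = c
    · subst h; simp
    · rw [if_neg h]
      obtain ⟨t, ht⟩ := Function.ne_iff.mp h
      exact Finset.prod_eq_zero (Finset.mem_univ t) (by simp [Ne.symm ht])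
  simp only [h1]
  simp

lemma sum_pi3 {n : ℕ} (F : (Fin 3 → Fin n) → ℝ) :
    ∑ p : Fin 3 → Fin n, F p = ∑ a : Fin n, ∑ b : Fin n, ∑ c : Fin n, F ![a, b, c] := by
  rw [← Equiv.sum_comp (Fin.consEquiv (fun _ : Fin 3 => Fin n)) F, Fintype.sum_prod_type]
  refine Finset.sum_congr rfl (fun a _ => ?_)
  rw [← Equiv.sum_comp (Fin.consEquiv (fun _ : Fin 2 => Fin n)) _, Fintype.sum_prod_type]
  refine Finset.sum_congr rfl (fun b _ => ?_)
  rw [← Equiv.sum_comp (Fin.consEquiv (fun _ : Fin 1 => Fin n)) _, Fintype.sum_prod_type]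
  refine Finset.sum_congr rfl (fun c _ => ?_)
  rw [Fintype.sum_unique]
  exact congrArg F (by funext t; fin_cases t <;> rfl)

lemma pull3 {A B C : Type*} [Fintype A] [Fintype B] [Fintype C] (f : A → B → C → ℝ) :
    ∑ a : A, ∑ b : B, ∑ c : C, f a b c = ∑ c : C, ∑ a : A, ∑ b : B, f a b c :=
  (Finset.sum_congr rfl (fun a _ => Finset.sum_comm)).trans Finset.sum_comm

lemma reindex3 (ρ : Perm (Fin 3)) (F : (Fin 3 → Fin n) → ℝ) :
    ∑ p : Fin 3 → Fin n, F (p ∘ ρ) = ∑ p : Fin 3 → Fin n, F p :=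
 by
  refine Fintype.sum_bijective (fun p => p ∘ ρ) ⟨fun f g h => ?_, fun g => ⟨g ∘ ρ.symm, by funext t; simp⟩⟩ _ _ (fun p => rfl)
  funext t
  have := congrFun h (ρ.symm t)
  simpa using this

lemma annihilate {n : ℕ} (t0 : Fin 3) (F : (Fin 3 → Fin n) → ℝ)
    (h : ∀ p : Fin 3 → Fin n, ∑ c : Fin n, F (Function.update p t0 c) = 0) :
    ∑ p : Fin 3 → Fin n, F p = 0 := by
  rcases Nat.eq_zero_or_pos n with hn | hn
  · subst hn
    have : IsEmpty (Fin 3 → Fin 0) := ⟨fun f => (f 0).elim0⟩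
    simp [Finset.univ_eq_empty]
  · set e := Equiv.funSplitAt t0 (Fin n) with he
    rw [← Equiv.sum_comp e.symm F, Fintype.sum_prod_type, Finset.sum_comm]
    refine Finset.sum_eq_zero (fun g _ => ?_)
    have key : ∀ c : Fin n, e.symm (c, g) = Function.update (e.symm (⟨0, hn⟩, g)) t0 c := by
      intro c; funext x
      by_cases hx : x = t0
      · subst hx; simp [he]
      · simp [he, Function.update_of_ne hx, hx]
    calc ∑ c : Fin n, F (e.symm (c, g))
        = ∑ c : Fin n, F (Function.update (e.symm (⟨0, hn⟩, g)) t0 c) := by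
          exact Finset.sum_congr rfl (fun c _ => congrArg F (key c))
      _ = 0 := h _

variable {n : ℕ}

def PA : Equiv.Perm ii :=
  ⟨fun x => match x with
    | .inl _ => .inl 0
    | .inr (.inl t) => .inr (.inr t)
    | .inr (.inr t) => .inr (.inl t),
   fun x => match x with
    | .inl _ => .inl 0
    | .inr (.inl t) => .inr (.inr t)
    | .inr (.inr t) => .inr (.inl t),
   by decide, by decide⟩

def PB0 : Equiv.Perm ii :=
  ⟨fun x => match x with
    | .inl _ => .inr (.inl 0)
    | .inr (.inl t) => .inr (.inr t)
    | .inr (.inr t) => if t = 0 then .inl 0 else if t = 1 then .inr (.inl 1) else .inr (.inl 2),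
   fun x => match x with
    | .inl _ => .inr (.inr 0)
    | .inr (.inl t) => if t = 0 then .inl 0 else if t = 1 then .inr (.inr 1) else .inr (.inr 2)
    | .inr (.inr t) => .inr (.inl t),
   by decide, by decide⟩

def PB1 : Equiv.Perm ii :=
  ⟨fun x => match x with
    | .inl _ => .inr (.inl 1)
    | .inr (.inl t) => .inr (.inr t)
    | .inr (.inr t) => if t = 0 then .inl 0 else if t = 1 then .inr (.inl 0) else .inr (.inl 2),
   fun x => match x with
    | .inl _ => .inr (.inr 0)
    | .inr (.inl t) => if t = 0 then .inr (.inr 1) else if t = 1 then .inl 0 else .inr (.inr 2)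
    | .inr (.inr t) => .inr (.inl t),
   by decide, by decide⟩

def PB2 : Equiv.Perm ii :=
  ⟨fun x => match x with
    | .inl _ => .inr (.inl 2)
    | .inr (.inl t) => .inr (.inr t)
    | .inr (.inr t) => if t = 0 then .inl 0 else if t = 1 then .inr (.inl 0) else .inr (.inl 1),
   fun x => match x with
    | .inl _ => .inr (.inr 0)
    | .inr (.inl t) => if t = 0 then .inr (.inr 1) else if t = 1 then .inr (.inr 2) else .inl 0
    | .inr (.inr t) => .inr (.inl t),
   by decide, by decide⟩

def PC0 : Equiv.Perm ii :=
  ⟨fun x => match x with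
    | .inl _ => .inr (.inr 0)
    | .inr (.inl t) => if t = 0 then .inl 0 else if t = 1 then .inr (.inr 1) else .inr (.inr 2)
    | .inr (.inr t) => .inr (.inl t),
   fun x => match x with
    | .inl _ => .inr (.inl 0)
    | .inr (.inl t) => .inr (.inr t)
    | .inr (.inr t) => if t = 0 then .inl 0 else if t = 1 then .inr (.inl 1) else .inr (.inl 2),
   by decide, by decide⟩

def PC1 : Equiv.Perm ii :=
  ⟨fun x => match x with
    | .inl _ => .inr (.inr 1)
    | .inr (.inl t) => if t = 0 then .inl 0 else if t = 1 then .inr (.inr 0) else .inr (.inr 2)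
    | .inr (.inr t) => .inr (.inl t),
   fun x => match x with
    | .inl _ => .inr (.inl 0)
    | .inr (.inl t) => .inr (.inr t)
    | .inr (.inr t) => if t = 0 then .inr (.inl 1) else if t = 1 then .inl 0 else .inr (.inl 2),
   by decide, by decide⟩

def PC2 : Equiv.Perm ii :=
  ⟨fun x => match x with
    | .inl _ => .inr (.inr 2)
    | .inr (.inl t) => if t = 0 then .inl 0 else if t = 1 then .inr (.inr 0) else .inr (.inr 1)
    | .inr (.inr t) => .inr (.inl t),
   fun x => match x with
    | .inl _ => .inr (.inl 0)
    | .inr (.inl t) => .inr (.inr t)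
    | .inr (.inr t) => if t = 0 then .inr (.inl 1) else if t = 1 then .inr (.inl 2) else .inl 0,
   by decide, by decide⟩

def bp (α β : Perm (Fin 3)) : Perm ii := Equiv.sumCongr (Equiv.refl (Fin 1)) (Equiv.sumCongr α β)

lemma bp_inl (α β : Perm (Fin 3)) : bp α β (inl 0) = inl 0 := rfl

lemma bp_il (α β : Perm (Fin 3)) (t : Fin 3) : bp α β (inr (inl t)) = inr (inl (α t)) := rfl

lemma bp_ir (α β : Perm (Fin 3)) (t : Fin 3) : bp α β (inr (inr t)) = inr (inr (β t)) := rfl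

lemma sign_bp (α β : Perm (Fin 3)) : Equiv.Perm.sign (bp α β)
    = Equiv.Perm.sign α * Equiv.Perm.sign β := by
  rw [bp, Equiv.Perm.sign_sumCongr, Equiv.Perm.sign_sumCongr]
  simp

lemma extract (ρ : Perm ii) (h0 : ρ (inl 0) = inl 0)
    (h1 : ∀ t : Fin 3, ∃ t', ρ (inr (inl t)) = inr (inl t'))
    (h2 : ∀ t : Fin 3, ∃ t', ρ (inr (inr t)) = inr (inr t')) :
    ∃ α β : Perm (Fin 3), ρ = bp α β := by
  choose fα hfα using h1
  choose fβ hfβ using h2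
  have hinjα : Function.Injective fα := by
    intro a b hab
    have : ρ (inr (inl a)) = ρ (inr (inl b)) := by rw [hfα, hfα, hab]
    simpa using ρ.injective this
  have hinjβ : Function.Injective fβ := by
    intro a b hab
    have : ρ (inr (inr a)) = ρ (inr (inr b)) := by rw [hfβ, hfβ, hab]
    simpa using ρ.injective this
  refine ⟨Equiv.ofBijective fα (Finite.injective_iff_bijective.mp hinjα),
          Equiv.ofBijective fβ (Finite.injective_iff_bijective.mp hinjβ), ?_⟩
  ext x
  rcases x with z | x
  · rw [Subsingleton.elim z 0]; exact h0
  rcases x with y | y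
  · exact hfα y
  · exact hfβ y

lemma build (σ P : Perm ii)
    (h0 : P⁻¹ (σ (inl 0)) = inl 0)
    (hA : ∀ t : Fin 3, ∃ t', P⁻¹ (σ (inr (inl t))) = inr (inl t'))
    (hB : ∀ t : Fin 3, ∃ t', P⁻¹ (σ (inr (inr t))) = inr (inr t')) :
    ∃ α β : Perm (Fin 3), σ = P * bp α β := by
  obtain ⟨α, β, h⟩ := extract (P⁻¹ * σ) h0 hA hB
  exact ⟨α, β, by rw [← h]; group⟩

lemma counting1 (σ : Perm ii) (m t0 : Fin 3)
    (h2 : ∀ t t' : Fin 3, σ (inr (inr t)) ≠ inr (inr t'))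
    (hs0 : σ (inl 0) = inr (inl m))
    (hc : σ (inr (inl t0)) = inl 0) : False := by
  have key : ∀ t : Fin 3, ∃ y : Fin 3, σ (inr (inr t)) = inr (inl y) ∧ y ≠ m := by
    intro t
    rcases hv : σ (inr (inr t)) with z | x
    · exfalso
      rw [Subsingleton.elim z 0, ← hc] at hv
      simpa using σ.injective hv
    rcases x with y | y
    · refine ⟨y, rfl, fun hy => ?_⟩
      subst hy
      rw [← hs0] at hv
      simpa using σ.injective hv
    · exact absurd hv (h2 t y)
  choose g hg hgm using key
  have ginj : Function.Injective g := by
    intro a b hab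
    have : σ (inr (inr a)) = σ (inr (inr b)) := by rw [hg, hg, hab]
    simpa using σ.injective this
  have hsub : (univ : Finset (Fin 3)).image g ⊆ (univ : Finset (Fin 3)).erase m := by
    intro y hy
    simp only [Finset.mem_image] at hy
    obtain ⟨t, _, rfl⟩ := hy
    exact Finset.mem_erase.mpr ⟨hgm t, Finset.mem_univ _⟩
  have := Finset.card_le_card hsub
  rw [Finset.card_image_of_injective _ ginj, Finset.card_erase_of_mem (Finset.mem_univ m)] at this
  simp at this

lemma counting2 (σ : Perm ii) (m t0 : Fin 3)
    (h1 : ∀ t t' : Fin 3, σ (inr (inl t)) ≠ inr (inl t'))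
    (hs0 : σ (inl 0) = inr (inr m))
    (hc : σ (inr (inr t0)) = inl 0) : False := by
  have key : ∀ t : Fin 3, ∃ y : Fin 3, σ (inr (inl t)) = inr (inr y) ∧ y ≠ m := by
    intro t
    rcases hv : σ (inr (inl t)) with z | x
    · exfalso
      rw [Subsingleton.elim z 0, ← hc] at hv
      simpa using σ.injective hv
    rcases x with y | y
    · exact absurd hv (h1 t y)
    · refine ⟨y, rfl, fun hy => ?_⟩
      subst hy
      rw [← hs0] at hv
      simpa using σ.injective hv
  choose g hg hgm using key
  have ginj : Function.Injective g := by
    intro a b hab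
    have : σ (inr (inl a)) = σ (inr (inl b)) := by rw [hg, hg, hab]
    simpa using σ.injective this
  have hsub : (univ : Finset (Fin 3)).image g ⊆ (univ : Finset (Fin 3)).erase m := by
    intro y hy
    simp only [Finset.mem_image] at hy
    obtain ⟨t, _, rfl⟩ := hy
    exact Finset.mem_erase.mpr ⟨hgm t, Finset.mem_univ _⟩
  have := Finset.card_le_card hsub
  rw [Finset.card_image_of_injective _ ginj, Finset.card_erase_of_mem (Finset.mem_univ m)] at this
  simp at this

def Plist : Fin 7 → Perm ii := ![PA, PB0, PB1, PB2, PC0, PC1, PC2]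

lemma classify (σ : Perm ii)
    (h1 : ∀ t t' : Fin 3, σ (inr (inl t)) ≠ inr (inl t'))
    (h2 : ∀ t t' : Fin 3, σ (inr (inr t)) ≠ inr (inr t')) :
    ∃ (s : Fin 7) (α β : Perm (Fin 3)), σ = Plist s * bp α β := by
  rcases hs : σ (inl 0) with z | x
  · -- class A
    rw [Subsingleton.elim z 0] at hs
    refine ⟨0, ?_⟩
    apply build σ PA (by rw [hs]; decide)
    · intro t
      have hv2 : σ (inr (inl t)) ≠ (inl 0 : ii) := by
        rw [← hs]; intro h; simpa using σ.injective h
      have gen : ∀ v : ii, (∀ y, v ≠ inr (inl y)) → v ≠ inl 0 →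
          ∃ t', PA⁻¹ v = inr (inl t') := by decide
      exact gen _ (h1 t) hv2
    · intro t
      have hv2 : σ (inr (inr t)) ≠ (inl 0 : ii) := by
        rw [← hs]; intro h; simpa using σ.injective h
      have gen : ∀ v : ii, (∀ y, v ≠ inr (inr y)) → v ≠ inl 0 →
          ∃ t', PA⁻¹ v = inr (inr t') := by decide
      exact gen _ (h2 t) hv2
  rcases x with m | m
  · -- class B
    have key : ∀ (P : Perm ii), P⁻¹ (inr (inl m) : ii) = inl 0 →
        (∀ v : ii, (∀ y, v ≠ inr (inl y)) → v ≠ inl 0 → ∃ t', P⁻¹ v = inr (inl t')) →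
        (∀ v : ii, (∀ y, v ≠ inr (inr y)) → v ≠ inr (inl m) → ∃ t', P⁻¹ v = inr (inr t')) →
        ∃ (α β : Perm (Fin 3)), σ = P * bp α β := by
      intro P hP0 genA genB
      apply build σ P (by rw [hs]; exact hP0)
      · intro t
        have hv3 : σ (inr (inl t)) ≠ (inl 0 : ii) := fun hc => counting1 σ m t h2 hs hc
        exact genA _ (h1 t) hv3
      · intro t
        have hv2 : σ (inr (inr t)) ≠ (inr (inl m) : ii) := by
          rw [← hs]; intro h; simpa using σ.injective h
        exact genB _ (h2 t) hv2
    fin_cases m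
    · exact ⟨1, key PB0 (by decide) (by decide) (by decide)⟩
    · exact ⟨2, key PB1 (by decide) (by decide) (by decide)⟩
    · exact ⟨3, key PB2 (by decide) (by decide) (by decide)⟩
  · -- class C
    have key : ∀ (P : Perm ii), P⁻¹ (inr (inr m) : ii) = inl 0 →
        (∀ v : ii, (∀ y, v ≠ inr (inl y)) → v ≠ inr (inr m) → ∃ t', P⁻¹ v = inr (inl t')) →
        (∀ v : ii, (∀ y, v ≠ inr (inr y)) → v ≠ inl 0 → ∃ t', P⁻¹ v = inr (inr t')) →
        ∃ (α β : Perm (Fin 3)), σ = P * bp α β := by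
      intro P hP0 genA genB
      apply build σ P (by rw [hs]; exact hP0)
      · intro t
        have hv2 : σ (inr (inl t)) ≠ (inr (inr m) : ii) := by
          rw [← hs]; intro h; simpa using σ.injective h
        exact genA _ (h1 t) hv2
      · intro t
        have hv3 : σ (inr (inr t)) ≠ (inl 0 : ii) := fun hc => counting2 σ m t h1 hs hc
        exact genB _ (h2 t) hv3
    fin_cases m
    · exact ⟨4, key PC0 (by decide) (by decide) (by decide)⟩
    · exact ⟨5, key PC1 (by decide) (by decide) (by decide)⟩
    · exact ⟨6, key PC2 (by decide) (by decide) (by decide)⟩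

section withH

variable {n : ℕ}

def U (j : Fin n) (p q : Fin 3 → Fin n) : ii → Fin n := Sum.elim (fun _ => j) (Sum.elim p q)

variable (H : Fin n → Fin n → Fin n → Fin n → Fin n → Fin n → ℝ)

def A1 : Prop := ∀ (σ : Equiv.Perm (Fin 3)) (a b c d e f : Fin n),
      H (![a, b, c] (σ 0)) (![a, b, c] (σ 1)) (![a, b, c] (σ 2)) d e f
        = ((Equiv.Perm.sign σ : ℤ) : ℝ) * H a b c d e f
def A2 : Prop := ∀ (σ : Equiv.Perm (Fin 3)) (a b c d e f : Fin n),
      H a b c (![d, e, f] (σ 0)) (![d, e, f] (σ 1)) (![d, e, f] (σ 2))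
        = ((Equiv.Perm.sign σ : ℤ) : ℝ) * H a b c d e f
def TF : Prop := ∀ a b d e, ∑ i, H a b i d e i = 0

def Psi (j k : Fin n) (σ : Perm ii) : ℝ :=
  ∑ p : Fin 3 → Fin n, ∑ q : Fin 3 → Fin n,
    (if U j p q (σ (inl 0)) = k then (1:ℝ) else 0) *
      (H (p 0) (p 1) (p 2) (U j p q (σ (inr (inl 0)))) (U j p q (σ (inr (inl 1))))
          (U j p q (σ (inr (inl 2)))) *
       H (q 0) (q 1) (q 2) (U j p q (σ (inr (inr 0)))) (U j p q (σ (inr (inr 1))))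
          (U j p q (σ (inr (inr 2)))))

def Tpi : ℝ :=
  ∑ p : Fin 3 → Fin n, ∑ q : Fin 3 → Fin n,
    H (p 0) (p 1) (p 2) (q 0) (q 1) (q 2) * H (q 0) (q 1) (q 2) (p 0) (p 1) (p 2)

def Mpi (j k : Fin n) : ℝ :=
  ∑ p : Fin 3 → Fin n, ∑ q : Fin 3 → Fin n,
    (if p 2 = k then (1:ℝ) else 0) *
      (H (p 0) (p 1) (p 2) (q 0) (q 1) (q 2) * H (q 0) (q 1) (q 2) (p 0) (p 1) j)

lemma hA2' (h2 : A2 H) (ρ : Perm (Fin 3)) (a b c : Fin n) (v : Fin 3 → Fin n) :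
    H a b c (v (ρ 0)) (v (ρ 1)) (v (ρ 2))
      = ((Equiv.Perm.sign ρ : ℤ) : ℝ) * H a b c (v 0) (v 1) (v 2) := by
  have := h2 ρ a b c (v 0) (v 1) (v 2); rwa [vec_eta] at this

lemma hA1' (h1 : A1 H) (ρ : Perm (Fin 3)) (v : Fin 3 → Fin n) (d e f : Fin n) :
    H (v (ρ 0)) (v (ρ 1)) (v (ρ 2)) d e f
      = ((Equiv.Perm.sign ρ : ℤ) : ℝ) * H (v 0) (v 1) (v 2) d e f := by
  have := h1 ρ (v 0) (v 1) (v 2) d e f; rwa [vec_eta] at this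

lemma eU0 (h2 : A2 H) (x y z c d e : Fin n) : H x y z c d e = H x y z d e c := by
  have h := h2 rot2 x y z d e c
  rw [show ((Equiv.Perm.sign rot2 : ℤ) : ℝ) = 1 by
    rw [show Equiv.Perm.sign rot2 = 1 by decide]; norm_num, one_mul] at h
  simpa [rot2] using h

lemma eL0 (h1 : A1 H) (a b c x y z : Fin n) : H c a b x y z = H a b c x y z := by
  have h := h1 rot2 a b c x y z
  rw [show ((Equiv.Perm.sign rot2 : ℤ) : ℝ) = 1 by
    rw [show Equiv.Perm.sign rot2 = 1 by decide]; norm_num, one_mul] at h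
  simpa [rot2] using h

lemma eL1 (h1 : A1 H) (a b c x y z : Fin n) : H a c b x y z = -H a b c x y z := by
  have h := h1 sw12 a b c x y z
  rw [show ((Equiv.Perm.sign sw12 : ℤ) : ℝ) = -1 by
    rw [show Equiv.Perm.sign sw12 = -1 by decide]; norm_num] at h
  rw [show (sw12 0 : Fin 3) = 0 by decide, show (sw12 1 : Fin 3) = 2 by decide,
    show (sw12 2 : Fin 3) = 1 by decide] at h
  simpa using h

lemma eU1 (h2 : A2 H) (x y z c d e : Fin n) : H x y z d c e = -H x y z d e c := by
  have h := h2 sw12 x y z d e c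
  rw [show ((Equiv.Perm.sign sw12 : ℤ) : ℝ) = -1 by rw [show Equiv.Perm.sign sw12 = -1 by decide]; norm_num] at h
  rw [show (sw12 0 : Fin 3) = 0 by decide, show (sw12 1 : Fin 3) = 2 by decide,
    show (sw12 2 : Fin 3) = 1 by decide] at h
  simpa using h

lemma resolve (u : ii → Fin n) (k : Fin n) (F G : (Fin 3 → Fin n) → ℝ) :
    ∑ r : Fin 3 → Fin n, ∑ s : Fin 3 → Fin n,
      (∏ i : ii, if u i = U k r s i then (1:ℝ) else 0)
        * (F r * G s)
    = (if u (inl 0) = k then (1:ℝ) else 0) *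
        (F (fun t => u (inr (inl t))) * G (fun t => u (inr (inr t)))) := by
  have hsplit : ∀ r s : Fin 3 → Fin n,
      (∏ i : ii, if u i = U k r s i then (1:ℝ) else 0)
      = (if u (inl 0) = k then (1:ℝ) else 0) *
          ((∏ t : Fin 3, if u (inr (inl t)) = r t then (1:ℝ) else 0) *
           (∏ t : Fin 3, if u (inr (inr t)) = s t then (1:ℝ) else 0)) := by
    intro r s
    rw [Fintype.prod_sum_type, Fintype.prod_sum_type, Fin.prod_univ_one]
    rfl
  calc ∑ r : Fin 3 → Fin n, ∑ s : Fin 3 → Fin n,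
        (∏ i : ii, if u i = U k r s i then (1:ℝ) else 0)
          * (F r * G s)
      = ∑ r : Fin 3 → Fin n,
          ((∏ t : Fin 3, if u (inr (inl t)) = r t then (1:ℝ) else 0) *
            ((if u (inl 0) = k then (1:ℝ) else 0) * F r)) *
          ∑ s : Fin 3 → Fin n,
            (∏ t : Fin 3, if u (inr (inr t)) = s t then (1:ℝ) else 0) * G s := by
        refine Finset.sum_congr rfl (fun r _ => ?_)
        rw [Finset.mul_sum]
        refine Finset.sum_congr rfl (fun s _ => ?_)
        rw [hsplit r s]; ring
    _ = _ := by
        rw [delta_pi]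
        rw [← Finset.sum_mul]
        rw [delta_pi (fun t => u (inr (inl t)))
          (fun r => (if u (inl 0) = k then (1:ℝ) else 0) * F r)]
        ring

lemma master (hn : n ≤ 6) (j k : Fin n) :
    (0:ℝ) = ∑ σ : Perm ii, ((Equiv.Perm.sign σ : ℤ) : ℝ) * Psi H j k σ := by
  have det0 : ∀ p q r s : Fin 3 → Fin n,
      Matrix.det (Matrix.of fun (i l : ii) => if U j p q i = U k r s l then (1:ℝ) else 0) = 0 := by
    intro p q r s
    obtain ⟨i, i', hne, heq⟩ := Fintype.exists_ne_map_eq_of_card_lt (U j p q)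
      (by simp only [Fintype.card_sum, Fintype.card_fin]; omega)
    exact Matrix.det_zero_of_row_eq hne (by funext l; simp only [Matrix.of_apply, heq])
  calc (0:ℝ)
      = ∑ p : Fin 3 → Fin n, ∑ q : Fin 3 → Fin n, ∑ r : Fin 3 → Fin n, ∑ s : Fin 3 → Fin n,
          (Matrix.det (Matrix.of fun (i l : ii) => if U j p q i = U k r s l then (1:ℝ) else 0)) *
            (H (p 0) (p 1) (p 2) (r 0) (r 1) (r 2) * H (q 0) (q 1) (q 2) (s 0) (s 1) (s 2)) := by
        simp [det0]
    _ = ∑ p : Fin 3 → Fin n, ∑ q : Fin 3 → Fin n, ∑ r : Fin 3 → Fin n, ∑ s : Fin 3 → Fin n, ∑ σ : Perm ii,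
          ((Equiv.Perm.sign σ : ℤ) : ℝ) *
            ((∏ i : ii, if U j p q (σ i) = U k r s i then (1:ℝ) else 0) *
              (H (p 0) (p 1) (p 2) (r 0) (r 1) (r 2) * H (q 0) (q 1) (q 2) (s 0) (s 1) (s 2))) := by
        refine Finset.sum_congr rfl fun p _ => Finset.sum_congr rfl fun q _ => ?_
        refine Finset.sum_congr rfl fun r _ => Finset.sum_congr rfl fun s _ => ?_
        rw [Matrix.det_apply', Finset.sum_mul]
        refine Finset.sum_congr rfl fun σ _ => ?_
        simp only [Matrix.of_apply]
        ring
    _ = ∑ p : Fin 3 → Fin n, ∑ q : Fin 3 → Fin n, ∑ σ : Perm ii, ∑ r : Fin 3 → Fin n, ∑ s : Fin 3 → Fin n,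
          ((Equiv.Perm.sign σ : ℤ) : ℝ) *
            ((∏ i : ii, if U j p q (σ i) = U k r s i then (1:ℝ) else 0) *
              (H (p 0) (p 1) (p 2) (r 0) (r 1) (r 2) * H (q 0) (q 1) (q 2) (s 0) (s 1) (s 2))) :=
        Finset.sum_congr rfl fun p _ => Finset.sum_congr rfl fun q _ => pull3 _
    _ = ∑ σ : Perm ii, ∑ p : Fin 3 → Fin n, ∑ q : Fin 3 → Fin n, ∑ r : Fin 3 → Fin n, ∑ s : Fin 3 → Fin n,
          ((Equiv.Perm.sign σ : ℤ) : ℝ) *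
            ((∏ i : ii, if U j p q (σ i) = U k r s i then (1:ℝ) else 0) *
              (H (p 0) (p 1) (p 2) (r 0) (r 1) (r 2) * H (q 0) (q 1) (q 2) (s 0) (s 1) (s 2))) :=
        pull3 _
    _ = ∑ σ : Perm ii, ((Equiv.Perm.sign σ : ℤ) : ℝ) * Psi H j k σ := by
        refine Finset.sum_congr rfl fun σ _ => ?_
        rw [Psi, Finset.mul_sum]
        refine Finset.sum_congr rfl fun p _ => ?_
        rw [Finset.mul_sum]
        refine Finset.sum_congr rfl fun q _ => ?_
        rw [← resolve (fun i => U j p q (σ i)) k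
          (fun r => H (p 0) (p 1) (p 2) (r 0) (r 1) (r 2))
          (fun s => H (q 0) (q 1) (q 2) (s 0) (s 1) (s 2)), Finset.mul_sum]
        refine Finset.sum_congr rfl fun r _ => ?_
        rw [Finset.mul_sum]

lemma factor_out (K C : ℝ) (B : Fin n → ℝ) (hB : ∑ c, B c = 0) :
    ∑ c : Fin n, K * (B c * C) = 0 := by
  have h : ∀ c, K * (B c * C) = (K * C) * B c := fun c => by ring
  rw [Finset.sum_congr rfl (fun c _ => h c), ← Finset.mul_sum, hB, mul_zero]

lemma factor_out2 (K C : ℝ) (B : Fin n → ℝ) (hB : ∑ c, B c = 0) :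
    ∑ c : Fin n, K * (C * B c) = 0 := by
  have h : ∀ c, K * (C * B c) = (K * C) * B c := fun c => by ring
  rw [Finset.sum_congr rfl (fun c _ => h c), ← Finset.mul_sum, hB, mul_zero]

lemma htf00 (h1 : A1 H) (h2 : A2 H) (htf : TF H) (a b d e : Fin n) :
    ∑ c, H c a b c d e = 0 := by
  rw [Finset.sum_congr rfl (fun c _ => show H c a b c d e = H a b c d e c from by rw [eL0 H h1]; rw [eU0 H h2])]
  exact htf a b d e

lemma htf01 (h1 : A1 H) (h2 : A2 H) (htf : TF H) (a b d e : Fin n) :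
    ∑ c, H c a b d c e = 0 := by
  rw [Finset.sum_congr rfl (fun c _ => show H c a b d c e = -H a b c d e c from by rw [eL0 H h1]; rw [eU1 H h2]; try ring)]
  simp [Finset.sum_neg_distrib, htf a b d e]

lemma htf02 (h1 : A1 H) (h2 : A2 H) (htf : TF H) (a b d e : Fin n) :
    ∑ c, H c a b d e c = 0 := by
  rw [Finset.sum_congr rfl (fun c _ => show H c a b d e c = H a b c d e c from by rw [eL0 H h1])]
  exact htf a b d e

lemma htf10 (h1 : A1 H) (h2 : A2 H) (htf : TF H) (a b d e : Fin n) :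
    ∑ c, H a c b c d e = 0 := by
  rw [Finset.sum_congr rfl (fun c _ => show H a c b c d e = -H a b c d e c from by rw [eL1 H h1]; rw [eU0 H h2]; try ring)]
  simp [Finset.sum_neg_distrib, htf a b d e]

lemma htf11 (h1 : A1 H) (h2 : A2 H) (htf : TF H) (a b d e : Fin n) :
    ∑ c, H a c b d c e = 0 := by
  rw [Finset.sum_congr rfl (fun c _ => show H a c b d c e = H a b c d e c from by rw [eL1 H h1]; rw [eU1 H h2]; try ring)]
  exact htf a b d e

lemma htf12 (h1 : A1 H) (h2 : A2 H) (htf : TF H) (a b d e : Fin n) :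
    ∑ c, H a c b d e c = 0 := by
  rw [Finset.sum_congr rfl (fun c _ => show H a c b d e c = -H a b c d e c from by rw [eL1 H h1]; try ring)]
  simp [Finset.sum_neg_distrib, htf a b d e]

lemma htf20 (h1 : A1 H) (h2 : A2 H) (htf : TF H) (a b d e : Fin n) :
    ∑ c, H a b c c d e = 0 := by
  rw [Finset.sum_congr rfl (fun c _ => show H a b c c d e = H a b c d e c from by rw [eU0 H h2])]
  exact htf a b d e

lemma htf21 (h1 : A1 H) (h2 : A2 H) (htf : TF H) (a b d e : Fin n) :
    ∑ c, H a b c d c e = 0 := by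
  rw [Finset.sum_congr rfl (fun c _ => show H a b c d c e = -H a b c d e c from by rw [eU1 H h2]; try ring)]
  simp [Finset.sum_neg_distrib, htf a b d e]

lemma htf22 (h1 : A1 H) (h2 : A2 H) (htf : TF H) (a b d e : Fin n) :
    ∑ c, H a b c d e c = 0 := by
  exact htf a b d e

lemma vanish1 (h1 : A1 H) (h2 : A2 H) (htf : TF H) (j k : Fin n) (σ : Perm ii) (t t' : Fin 3)
    (ht : σ (inr (inl t)) = inr (inl t')) : Psi H j k σ = 0 := by
  have hne0 : σ (inl 0) ≠ inr (inl t') := by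
    rw [← ht]; intro h; simpa using σ.injective h
  have hneir : ∀ x : Fin 3, σ (inr (inr x)) ≠ inr (inl t') := by
    intro x; rw [← ht]; intro h; simpa using σ.injective h
  have hneil : ∀ x : Fin 3, x ≠ t → σ (inr (inl x)) ≠ inr (inl t') := by
    intro x hx; rw [← ht]; intro h; exact hx (by simpa using σ.injective h)
  rw [Psi]
  apply annihilate t'
  intro p
  rw [Finset.sum_comm]
  refine Finset.sum_eq_zero (fun q _ => ?_)
  have hU : ∀ c, U j (Function.update p t' c) q = Function.update (U j p q) (inr (inl t')) c := by
    intro c; funext x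
    rcases x with z | x
    · rw [Function.update_of_ne (by simp)]; rfl
    rcases x with y | y
    · by_cases hy : y = t'
      · subst hy; rw [Function.update_self]; exact Function.update_self y c p
      · rw [Function.update_of_ne (show (inr (inl y) : ii) ≠ inr (inl t') by simp [hy])]
        exact Function.update_of_ne hy c p
    · rw [Function.update_of_ne (by simp)]; rfl
  simp only [hU, Function.update_of_ne hne0, Function.update_of_ne (hneir 0),
    Function.update_of_ne (hneir 1), Function.update_of_ne (hneir 2)]
  have htcases : ∀ (x : Fin 3), x = 0 ∨ x = 1 ∨ x = 2 := by decide
  rcases htcases t with rfl | rfl | rfl <;> rcases htcases t' with rfl | rfl | rfl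
  · -- t=0, t'=0
    simp only [ht, Function.update_self,
      Function.update_of_ne (hneil 1 (by decide)),
      Function.update_of_ne (hneil 2 (by decide)), Function.update_apply,
      show ((0:Fin 3) = 0) = True by simp,
      show ((1:Fin 3) = 0) = False by simp,
      show ((2:Fin 3) = 0) = False by simp,
      if_true, if_false]
    exact factor_out _ _ _ (htf00 H h1 h2 htf _ _ _ _)
  · -- t=0, t'=1
    simp only [ht, Function.update_self,
      Function.update_of_ne (hneil 1 (by decide)),
      Function.update_of_ne (hneil 2 (by decide)), Function.update_apply,
      show ((0:Fin 3) = 1) = False by simp,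
      show ((1:Fin 3) = 1) = True by simp,
      show ((2:Fin 3) = 1) = False by simp,
      if_true, if_false]
    exact factor_out _ _ _ (htf10 H h1 h2 htf _ _ _ _)
  · -- t=0, t'=2
    simp only [ht, Function.update_self,
      Function.update_of_ne (hneil 1 (by decide)),
      Function.update_of_ne (hneil 2 (by decide)), Function.update_apply,
      show ((0:Fin 3) = 2) = False by simp,
      show ((1:Fin 3) = 2) = False by simp,
      show ((2:Fin 3) = 2) = True by simp,
      if_true, if_false]
    exact factor_out _ _ _ (htf20 H h1 h2 htf _ _ _ _)
  · -- t=1, t'=0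
    simp only [ht, Function.update_self,
      Function.update_of_ne (hneil 0 (by decide)),
      Function.update_of_ne (hneil 2 (by decide)), Function.update_apply,
      show ((0:Fin 3) = 0) = True by simp,
      show ((1:Fin 3) = 0) = False by simp,
      show ((2:Fin 3) = 0) = False by simp,
      if_true, if_false]
    exact factor_out _ _ _ (htf01 H h1 h2 htf _ _ _ _)
  · -- t=1, t'=1
    simp only [ht, Function.update_self,
      Function.update_of_ne (hneil 0 (by decide)),
      Function.update_of_ne (hneil 2 (by decide)), Function.update_apply,
      show ((0:Fin 3) = 1) = False by simp,
      show ((1:Fin 3) = 1) = True by simp,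
      show ((2:Fin 3) = 1) = False by simp,
      if_true, if_false]
    exact factor_out _ _ _ (htf11 H h1 h2 htf _ _ _ _)
  · -- t=1, t'=2
    simp only [ht, Function.update_self,
      Function.update_of_ne (hneil 0 (by decide)),
      Function.update_of_ne (hneil 2 (by decide)), Function.update_apply,
      show ((0:Fin 3) = 2) = False by simp,
      show ((1:Fin 3) = 2) = False by simp,
      show ((2:Fin 3) = 2) = True by simp,
      if_true, if_false]
    exact factor_out _ _ _ (htf21 H h1 h2 htf _ _ _ _)
  · -- t=2, t'=0
    simp only [ht, Function.update_self,
      Function.update_of_ne (hneil 0 (by decide)),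
      Function.update_of_ne (hneil 1 (by decide)), Function.update_apply,
      show ((0:Fin 3) = 0) = True by simp,
      show ((1:Fin 3) = 0) = False by simp,
      show ((2:Fin 3) = 0) = False by simp,
      if_true, if_false]
    exact factor_out _ _ _ (htf02 H h1 h2 htf _ _ _ _)
  · -- t=2, t'=1
    simp only [ht, Function.update_self,
      Function.update_of_ne (hneil 0 (by decide)),
      Function.update_of_ne (hneil 1 (by decide)), Function.update_apply,
      show ((0:Fin 3) = 1) = False by simp,
      show ((1:Fin 3) = 1) = True by simp,
      show ((2:Fin 3) = 1) = False by simp,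
      if_true, if_false]
    exact factor_out _ _ _ (htf12 H h1 h2 htf _ _ _ _)
  · -- t=2, t'=2
    simp only [ht, Function.update_self,
      Function.update_of_ne (hneil 0 (by decide)),
      Function.update_of_ne (hneil 1 (by decide)), Function.update_apply,
      show ((0:Fin 3) = 2) = False by simp,
      show ((1:Fin 3) = 2) = False by simp,
      show ((2:Fin 3) = 2) = True by simp,
      if_true, if_false]
    exact factor_out _ _ _ (htf22 H h1 h2 htf _ _ _ _)

lemma vanish2 (h1 : A1 H) (h2 : A2 H) (htf : TF H) (j k : Fin n) (σ : Perm ii) (t t' : Fin 3)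
    (ht : σ (inr (inr t)) = inr (inr t')) : Psi H j k σ = 0 := by
  have hne0 : σ (inl 0) ≠ inr (inr t') := by
    rw [← ht]; intro h; simpa using σ.injective h
  have hneil : ∀ x : Fin 3, σ (inr (inl x)) ≠ inr (inr t') := by
    intro x; rw [← ht]; intro h; simpa using σ.injective h
  have hneir : ∀ x : Fin 3, x ≠ t → σ (inr (inr x)) ≠ inr (inr t') := by
    intro x hx; rw [← ht]; intro h; exact hx (by simpa using σ.injective h)
  rw [Psi]
  refine Finset.sum_eq_zero (fun p _ => ?_)
  apply annihilate t'
  intro q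
  have hU : ∀ c, U j p (Function.update q t' c) = Function.update (U j p q) (inr (inr t')) c := by
    intro c; funext x
    rcases x with z | x
    · rw [Function.update_of_ne (by simp)]; rfl
    rcases x with y | y
    · rw [Function.update_of_ne (by simp)]; rfl
    · by_cases hy : y = t'
      · subst hy; rw [Function.update_self]; exact Function.update_self y c q
      · rw [Function.update_of_ne (show (inr (inr y) : ii) ≠ inr (inr t') by simp [hy])]
        exact Function.update_of_ne hy c q
  simp only [hU, Function.update_of_ne hne0, Function.update_of_ne (hneil 0),
    Function.update_of_ne (hneil 1), Function.update_of_ne (hneil 2)]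
  have htcases : ∀ (x : Fin 3), x = 0 ∨ x = 1 ∨ x = 2 := by decide
  rcases htcases t with rfl | rfl | rfl <;> rcases htcases t' with rfl | rfl | rfl
  · -- t=0, t'=0
    simp only [ht, Function.update_self,
      Function.update_of_ne (hneir 1 (by decide)),
      Function.update_of_ne (hneir 2 (by decide)), Function.update_apply,
      show ((0:Fin 3) = 0) = True by simp,
      show ((1:Fin 3) = 0) = False by simp,
      show ((2:Fin 3) = 0) = False by simp,
      if_true, if_false]
    exact factor_out2 _ _ _ (htf00 H h1 h2 htf _ _ _ _)
  · -- t=0, t'=1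
    simp only [ht, Function.update_self,
      Function.update_of_ne (hneir 1 (by decide)),
      Function.update_of_ne (hneir 2 (by decide)), Function.update_apply,
      show ((0:Fin 3) = 1) = False by simp,
      show ((1:Fin 3) = 1) = True by simp,
      show ((2:Fin 3) = 1) = False by simp,
      if_true, if_false]
    exact factor_out2 _ _ _ (htf10 H h1 h2 htf _ _ _ _)
  · -- t=0, t'=2
    simp only [ht, Function.update_self,
      Function.update_of_ne (hneir 1 (by decide)),
      Function.update_of_ne (hneir 2 (by decide)), Function.update_apply,
      show ((0:Fin 3) = 2) = False by simp,
      show ((1:Fin 3) = 2) = False by simp,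
      show ((2:Fin 3) = 2) = True by simp,
      if_true, if_false]
    exact factor_out2 _ _ _ (htf20 H h1 h2 htf _ _ _ _)
  · -- t=1, t'=0
    simp only [ht, Function.update_self,
      Function.update_of_ne (hneir 0 (by decide)),
      Function.update_of_ne (hneir 2 (by decide)), Function.update_apply,
      show ((0:Fin 3) = 0) = True by simp,
      show ((1:Fin 3) = 0) = False by simp,
      show ((2:Fin 3) = 0) = False by simp,
      if_true, if_false]
    exact factor_out2 _ _ _ (htf01 H h1 h2 htf _ _ _ _)
  · -- t=1, t'=1
    simp only [ht, Function.update_self,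
      Function.update_of_ne (hneir 0 (by decide)),
      Function.update_of_ne (hneir 2 (by decide)), Function.update_apply,
      show ((0:Fin 3) = 1) = False by simp,
      show ((1:Fin 3) = 1) = True by simp,
      show ((2:Fin 3) = 1) = False by simp,
      if_true, if_false]
    exact factor_out2 _ _ _ (htf11 H h1 h2 htf _ _ _ _)
  · -- t=1, t'=2
    simp only [ht, Function.update_self,
      Function.update_of_ne (hneir 0 (by decide)),
      Function.update_of_ne (hneir 2 (by decide)), Function.update_apply,
      show ((0:Fin 3) = 2) = False by simp,
      show ((1:Fin 3) = 2) = False by simp,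
      show ((2:Fin 3) = 2) = True by simp,
      if_true, if_false]
    exact factor_out2 _ _ _ (htf21 H h1 h2 htf _ _ _ _)
  · -- t=2, t'=0
    simp only [ht, Function.update_self,
      Function.update_of_ne (hneir 0 (by decide)),
      Function.update_of_ne (hneir 1 (by decide)), Function.update_apply,
      show ((0:Fin 3) = 0) = True by simp,
      show ((1:Fin 3) = 0) = False by simp,
      show ((2:Fin 3) = 0) = False by simp,
      if_true, if_false]
    exact factor_out2 _ _ _ (htf02 H h1 h2 htf _ _ _ _)
  · -- t=2, t'=1
    simp only [ht, Function.update_self,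
      Function.update_of_ne (hneir 0 (by decide)),
      Function.update_of_ne (hneir 1 (by decide)), Function.update_apply,
      show ((0:Fin 3) = 1) = False by simp,
      show ((1:Fin 3) = 1) = True by simp,
      show ((2:Fin 3) = 1) = False by simp,
      if_true, if_false]
    exact factor_out2 _ _ _ (htf12 H h1 h2 htf _ _ _ _)
  · -- t=2, t'=2
    simp only [ht, Function.update_self,
      Function.update_of_ne (hneir 0 (by decide)),
      Function.update_of_ne (hneir 1 (by decide)), Function.update_apply,
      show ((0:Fin 3) = 2) = False by simp,
      show ((1:Fin 3) = 2) = False by simp,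
      show ((2:Fin 3) = 2) = True by simp,
      if_true, if_false]
    exact factor_out2 _ _ _ (htf22 H h1 h2 htf _ _ _ _)



lemma valA (h2 : A2 H) (j k : Fin n) (α β : Perm (Fin 3)) :
    Psi H j k (PA * bp α β)
      = ((Equiv.Perm.sign α : ℤ) : ℝ) * ((Equiv.Perm.sign β : ℤ) : ℝ) *
          ((if j = k then (1:ℝ) else 0) * Tpi H) := by
  rw [Psi]
  have e0 : (PA * bp α β) (inl 0) = inl 0 := rfl
  have e1 : ∀ t, (PA * bp α β) (inr (inl t)) = inr (inr (α t)) := fun t => rfl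
  have e2 : ∀ t, (PA * bp α β) (inr (inr t)) = inr (inl (β t)) := fun t => rfl
  simp only [e0, e1, e2, U, Sum.elim_inl, Sum.elim_inr]
  rw [Tpi]
  simp only [Finset.mul_sum]
  refine Finset.sum_congr rfl fun p _ => Finset.sum_congr rfl fun q _ => ?_
  rw [hA2' H h2 α (p 0) (p 1) (p 2) q, hA2' H h2 β (q 0) (q 1) (q 2) p]
  ring

lemma valB0 (h1 : A1 H) (h2 : A2 H) (j k : Fin n) (α β : Perm (Fin 3)) :
    Psi H j k (PB0 * bp α β)
      = ((Equiv.Perm.sign α : ℤ) : ℝ) * ((Equiv.Perm.sign β : ℤ) : ℝ) * Mpi H j k := by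
  rw [Psi]
  have e0 : (PB0 * bp α β) (inl 0) = inr (inl 0) := rfl
  have e1 : ∀ t, (PB0 * bp α β) (inr (inl t)) = inr (inr (α t)) := fun t => rfl
  have e2 : ∀ t, (PB0 * bp α β) (inr (inr t)) = PB0 (inr (inr (β t))) := fun t => rfl
  have uir : ∀ (p q : Fin 3 → Fin n) (x : Fin 3), U j p q (inr (inr x)) = q x := fun _ _ _ => rfl
  have uil : ∀ (p q : Fin 3 → Fin n) (x : Fin 3), U j p q (inr (inl x)) = p x := fun _ _ _ => rfl
  simp only [e0, e1, e2, uir, uil]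
  rw [← reindex3 rot2]
  rw [Mpi]
  simp only [Finset.mul_sum]
  refine Finset.sum_congr rfl fun p _ => Finset.sum_congr rfl fun q _ => ?_
  simp only [Function.comp_apply, show ((rot2 : Perm (Fin 3)) 0 : Fin 3) = 2 from rfl,
    show ((rot2 : Perm (Fin 3)) 1 : Fin 3) = 0 from rfl,
    show ((rot2 : Perm (Fin 3)) 2 : Fin 3) = 1 from rfl]
  rw [hA2' H h2 α (p 2) (p 0) (p 1) q,
      hA2' H h2 β (q 0) (q 1) (q 2) (fun x => U j (p ∘ (rot2 : Perm (Fin 3))) q (PB0 (inr (inr x))))]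
  rw [show U j (p ∘ (rot2 : Perm (Fin 3))) q (PB0 (inr (inr 0))) = j from rfl,
      show U j (p ∘ (rot2 : Perm (Fin 3))) q (PB0 (inr (inr 1))) = p 0 from rfl,
      show U j (p ∘ (rot2 : Perm (Fin 3))) q (PB0 (inr (inr 2))) = p 1 from rfl]
  rw [eU0 H h2 (q 0) (q 1) (q 2) j (p 0) (p 1), eL0 H h1 (p 0) (p 1) (p 2) (q 0) (q 1) (q 2)]
  ring

lemma valB1 (h1 : A1 H) (h2 : A2 H) (j k : Fin n) (α β : Perm (Fin 3)) :
    Psi H j k (PB1 * bp α β)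
      = -(((Equiv.Perm.sign α : ℤ) : ℝ) * ((Equiv.Perm.sign β : ℤ) : ℝ) * Mpi H j k) := by
  rw [Psi]
  have e0 : (PB1 * bp α β) (inl 0) = inr (inl 1) := rfl
  have e1 : ∀ t, (PB1 * bp α β) (inr (inl t)) = inr (inr (α t)) := fun t => rfl
  have e2 : ∀ t, (PB1 * bp α β) (inr (inr t)) = PB1 (inr (inr (β t))) := fun t => rfl
  have uir : ∀ (p q : Fin 3 → Fin n) (x : Fin 3), U j p q (inr (inr x)) = q x := fun _ _ _ => rfl
  have uil : ∀ (p q : Fin 3 → Fin n) (x : Fin 3), U j p q (inr (inl x)) = p x := fun _ _ _ => rfl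
  simp only [e0, e1, e2, uir, uil]
  rw [← reindex3 sw12]
  rw [Mpi]
  simp only [Finset.mul_sum, ← Finset.sum_neg_distrib]
  refine Finset.sum_congr rfl fun p _ => Finset.sum_congr rfl fun q _ => ?_
  simp only [Function.comp_apply, show ((sw12 : Perm (Fin 3)) 0 : Fin 3) = 0 by decide,
    show ((sw12 : Perm (Fin 3)) 1 : Fin 3) = 2 by decide,
    show ((sw12 : Perm (Fin 3)) 2 : Fin 3) = 1 by decide]
  rw [hA2' H h2 α (p 0) (p 2) (p 1) q,
      hA2' H h2 β (q 0) (q 1) (q 2) (fun x => U j (p ∘ (sw12 : Perm (Fin 3))) q (PB1 (inr (inr x))))]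
  rw [show U j (p ∘ (sw12 : Perm (Fin 3))) q (PB1 (inr (inr 0))) = j from rfl,
      show U j (p ∘ (sw12 : Perm (Fin 3))) q (PB1 (inr (inr 1))) = p 0 from rfl,
      show U j (p ∘ (sw12 : Perm (Fin 3))) q (PB1 (inr (inr 2))) = p 1 from rfl]
  rw [eU0 H h2 (q 0) (q 1) (q 2) j (p 0) (p 1), eL1 H h1 (p 0) (p 1) (p 2) (q 0) (q 1) (q 2)]
  ring

lemma valB2 (h1 : A1 H) (h2 : A2 H) (j k : Fin n) (α β : Perm (Fin 3)) :
    Psi H j k (PB2 * bp α β)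
      = ((Equiv.Perm.sign α : ℤ) : ℝ) * ((Equiv.Perm.sign β : ℤ) : ℝ) * Mpi H j k := by
  rw [Psi]
  have e0 : (PB2 * bp α β) (inl 0) = inr (inl 2) := rfl
  have e1 : ∀ t, (PB2 * bp α β) (inr (inl t)) = inr (inr (α t)) := fun t => rfl
  have e2 : ∀ t, (PB2 * bp α β) (inr (inr t)) = PB2 (inr (inr (β t))) := fun t => rfl
  have uir : ∀ (p q : Fin 3 → Fin n) (x : Fin 3), U j p q (inr (inr x)) = q x := fun _ _ _ => rfl
  have uil : ∀ (p q : Fin 3 → Fin n) (x : Fin 3), U j p q (inr (inl x)) = p x := fun _ _ _ => rfl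
  simp only [e0, e1, e2, uir, uil]
  rw [Mpi]
  simp only [Finset.mul_sum]
  refine Finset.sum_congr rfl fun p _ => Finset.sum_congr rfl fun q _ => ?_
  rw [hA2' H h2 α (p 0) (p 1) (p 2) q,
      hA2' H h2 β (q 0) (q 1) (q 2) (fun x => U j p q (PB2 (inr (inr x))))]
  rw [show U j p q (PB2 (inr (inr 0))) = j from rfl,
      show U j p q (PB2 (inr (inr 1))) = p 0 from rfl,
      show U j p q (PB2 (inr (inr 2))) = p 1 from rfl]
  rw [eU0 H h2 (q 0) (q 1) (q 2) j (p 0) (p 1)]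
  ring

lemma valC0 (h1 : A1 H) (h2 : A2 H) (j k : Fin n) (α β : Perm (Fin 3)) :
    Psi H j k (PC0 * bp α β)
      = ((Equiv.Perm.sign α : ℤ) : ℝ) * ((Equiv.Perm.sign β : ℤ) : ℝ) * Mpi H j k := by
  rw [Psi]
  have e0 : (PC0 * bp α β) (inl 0) = inr (inr 0) := rfl
  have e1 : ∀ t, (PC0 * bp α β) (inr (inl t)) = PC0 (inr (inl (α t))) := fun t => rfl
  have e2 : ∀ t, (PC0 * bp α β) (inr (inr t)) = inr (inl (β t)) := fun t => rfl
  have uir : ∀ (p q : Fin 3 → Fin n) (x : Fin 3), U j p q (inr (inr x)) = q x := fun _ _ _ => rfl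
  have uil : ∀ (p q : Fin 3 → Fin n) (x : Fin 3), U j p q (inr (inl x)) = p x := fun _ _ _ => rfl
  simp only [e0, e1, e2, uir, uil]
  rw [Finset.sum_comm]
  rw [← reindex3 rot2]
  rw [Mpi]
  simp only [Finset.mul_sum]
  refine Finset.sum_congr rfl fun x _ => Finset.sum_congr rfl fun y _ => ?_
  simp only [Function.comp_apply, show ((rot2 : Perm (Fin 3)) 0 : Fin 3) = 2 from rfl,
    show ((rot2 : Perm (Fin 3)) 1 : Fin 3) = 0 from rfl,
    show ((rot2 : Perm (Fin 3)) 2 : Fin 3) = 1 from rfl]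
  rw [hA2' H h2 α (y 0) (y 1) (y 2) (fun z => U j y (x ∘ (rot2 : Perm (Fin 3))) (PC0 (inr (inl z)))),
      hA2' H h2 β (x 2) (x 0) (x 1) y]
  rw [show U j y (x ∘ (rot2 : Perm (Fin 3))) (PC0 (inr (inl 0))) = j from rfl,
      show U j y (x ∘ (rot2 : Perm (Fin 3))) (PC0 (inr (inl 1))) = x 0 from rfl,
      show U j y (x ∘ (rot2 : Perm (Fin 3))) (PC0 (inr (inl 2))) = x 1 from rfl]
  rw [eU0 H h2 (y 0) (y 1) (y 2) j (x 0) (x 1), eL0 H h1 (x 0) (x 1) (x 2) (y 0) (y 1) (y 2)]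
  ring

lemma valC1 (h1 : A1 H) (h2 : A2 H) (j k : Fin n) (α β : Perm (Fin 3)) :
    Psi H j k (PC1 * bp α β)
      = -(((Equiv.Perm.sign α : ℤ) : ℝ) * ((Equiv.Perm.sign β : ℤ) : ℝ) * Mpi H j k) := by
  rw [Psi]
  have e0 : (PC1 * bp α β) (inl 0) = inr (inr 1) := rfl
  have e1 : ∀ t, (PC1 * bp α β) (inr (inl t)) = PC1 (inr (inl (α t))) := fun t => rfl
  have e2 : ∀ t, (PC1 * bp α β) (inr (inr t)) = inr (inl (β t)) := fun t => rfl
  have uir : ∀ (p q : Fin 3 → Fin n) (x : Fin 3), U j p q (inr (inr x)) = q x := fun _ _ _ => rfl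
  have uil : ∀ (p q : Fin 3 → Fin n) (x : Fin 3), U j p q (inr (inl x)) = p x := fun _ _ _ => rfl
  simp only [e0, e1, e2, uir, uil]
  rw [Finset.sum_comm]
  rw [← reindex3 sw12]
  rw [Mpi]
  simp only [Finset.mul_sum, ← Finset.sum_neg_distrib]
  refine Finset.sum_congr rfl fun x _ => Finset.sum_congr rfl fun y _ => ?_
  simp only [Function.comp_apply, show ((sw12 : Perm (Fin 3)) 0 : Fin 3) = 0 by decide,
    show ((sw12 : Perm (Fin 3)) 1 : Fin 3) = 2 by decide,
    show ((sw12 : Perm (Fin 3)) 2 : Fin 3) = 1 by decide]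
  rw [hA2' H h2 α (y 0) (y 1) (y 2) (fun z => U j y (x ∘ (sw12 : Perm (Fin 3))) (PC1 (inr (inl z)))),
      hA2' H h2 β (x 0) (x 2) (x 1) y]
  rw [show U j y (x ∘ (sw12 : Perm (Fin 3))) (PC1 (inr (inl 0))) = j from rfl,
      show U j y (x ∘ (sw12 : Perm (Fin 3))) (PC1 (inr (inl 1))) = x 0 from rfl,
      show U j y (x ∘ (sw12 : Perm (Fin 3))) (PC1 (inr (inl 2))) = x 1 from rfl]
  rw [eU0 H h2 (y 0) (y 1) (y 2) j (x 0) (x 1), eL1 H h1 (x 0) (x 1) (x 2) (y 0) (y 1) (y 2)]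
  ring



lemma valC2 (h1 : A1 H) (h2 : A2 H) (j k : Fin n) (α β : Perm (Fin 3)) :
    Psi H j k (PC2 * bp α β)
      = ((Equiv.Perm.sign α : ℤ) : ℝ) * ((Equiv.Perm.sign β : ℤ) : ℝ) * Mpi H j k := by
  rw [Psi]
  have e0 : (PC2 * bp α β) (inl 0) = inr (inr 2) := rfl
  have e1 : ∀ t, (PC2 * bp α β) (inr (inl t)) = PC2 (inr (inl (α t))) := fun t => rfl
  have e2 : ∀ t, (PC2 * bp α β) (inr (inr t)) = inr (inl (β t)) := fun t => rfl
  have uir : ∀ (p q : Fin 3 → Fin n) (x : Fin 3), U j p q (inr (inr x)) = q x := fun _ _ _ => rfl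
  have uil : ∀ (p q : Fin 3 → Fin n) (x : Fin 3), U j p q (inr (inl x)) = p x := fun _ _ _ => rfl
  simp only [e0, e1, e2, uir, uil]
  rw [Finset.sum_comm]
  rw [Mpi]
  simp only [Finset.mul_sum]
  refine Finset.sum_congr rfl fun x _ => Finset.sum_congr rfl fun y _ => ?_
  rw [hA2' H h2 α (y 0) (y 1) (y 2) (fun z => U j y x (PC2 (inr (inl z)))),
      hA2' H h2 β (x 0) (x 1) (x 2) y]
  rw [show U j y x (PC2 (inr (inl 0))) = j from rfl,
      show U j y x (PC2 (inr (inl 1))) = x 0 from rfl,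
      show U j y x (PC2 (inr (inl 2))) = x 1 from rfl]
  rw [eU0 H h2 (y 0) (y 1) (y 2) j (x 0) (x 1)]
  ring

-- ASSEMBLY

lemma sign_term (P : Perm ii) (α β : Perm (Fin 3)) :
    ((Equiv.Perm.sign (P * bp α β) : ℤ) : ℝ)
      = ((Equiv.Perm.sign P : ℤ) : ℝ) * ((Equiv.Perm.sign α : ℤ) : ℝ)
          * ((Equiv.Perm.sign β : ℤ) : ℝ) := by
  rw [map_mul, sign_bp]
  push_cast [Units.val_mul]
  ring

lemma key_eq (h1 : A1 H) (h2 : A2 H) (htf : TF H) (hn : n ≤ 6) (j k : Fin n) :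
    (216:ℝ) * Mpi H j k = 36 * ((if j = k then (1:ℝ) else 0) * Tpi H) := by
  have hm := master H hn j k
  set g : Fin 7 × Perm (Fin 3) × Perm (Fin 3) → Perm ii :=
    fun x => Plist x.1 * bp x.2.1 x.2.2 with hg
  have himg : ∀ σ : Perm ii, σ ∉ Finset.image g Finset.univ →
      ((Equiv.Perm.sign σ : ℤ) : ℝ) * Psi H j k σ = 0 := by
    intro σ hσ
    by_cases hb1 : ∃ t t', σ (inr (inl t)) = inr (inl t')
    · obtain ⟨t, t', ht⟩ := hb1
      rw [vanish1 H h1 h2 htf j k σ t t' ht, mul_zero]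
    by_cases hb2 : ∃ t t', σ (inr (inr t)) = inr (inr t')
    · obtain ⟨t, t', ht⟩ := hb2
      rw [vanish2 H h1 h2 htf j k σ t t' ht, mul_zero]
    push_neg at hb1 hb2
    obtain ⟨s, α, β, rfl⟩ := classify σ hb1 hb2
    exact absurd (Finset.mem_image.mpr ⟨(s, α, β), Finset.mem_univ _, rfl⟩) hσ
  have hsub : ∑ σ ∈ Finset.image g Finset.univ, ((Equiv.Perm.sign σ : ℤ) : ℝ) * Psi H j k σ
      = ∑ σ : Perm ii, ((Equiv.Perm.sign σ : ℤ) : ℝ) * Psi H j k σ :=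
    Finset.sum_subset (Finset.subset_univ _) (fun σ _ hσ => himg σ hσ)
  have hginj : ∀ x ∈ (Finset.univ : Finset (Fin 7 × Perm (Fin 3) × Perm (Fin 3))),
      ∀ y ∈ (Finset.univ : Finset (Fin 7 × Perm (Fin 3) × Perm (Fin 3))), g x = g y → x = y := by
    rintro ⟨s, α, β⟩ - ⟨s', α', β'⟩ - h
    have hs : s = s' := by
      have h0 := congrArg (fun σ : Perm ii => σ (inl 0)) h
      simp only [hg] at h0
      have h0' : Plist s (inl 0) = Plist s' (inl 0) := by
        have e : ∀ (γ δ : Perm (Fin 3)) (P : Perm ii), (P * bp γ δ) (inl 0) = P (inl 0) :=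
          fun _ _ _ => rfl
        rw [e, e] at h0
        exact h0
      have pinj : ∀ s s' : Fin 7, Plist s (inl 0) = Plist s' (inl 0) → s = s' := by decide
      exact pinj s s' h0'
    subst hs
    have hbp : bp α β = bp α' β' := mul_left_cancel h
    have hα : α = α' := by
      apply Equiv.ext; intro t
      have h3 := congrArg (fun σ : Perm ii => σ (inr (inl t))) hbp
      simpa [bp] using h3
    have hβ : β = β' := by
      apply Equiv.ext; intro t
      have h3 := congrArg (fun σ : Perm ii => σ (inr (inr t))) hbp
      simpa [bp] using h3
    simp [hα, hβ]
  have himage : ∑ σ ∈ Finset.image g Finset.univ, ((Equiv.Perm.sign σ : ℤ) : ℝ) * Psi H j k σ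
      = ∑ x : Fin 7 × Perm (Fin 3) × Perm (Fin 3),
          ((Equiv.Perm.sign (g x) : ℤ) : ℝ) * Psi H j k (g x) :=
    Finset.sum_image hginj
  have hcard : (Finset.univ : Finset (Perm (Fin 3) × Perm (Fin 3))).card = 36 := by
    simp [Finset.card_univ, Fintype.card_perm]
    rfl
  -- per-class values
  have hvalA : ∀ y : Perm (Fin 3) × Perm (Fin 3),
      ((Equiv.Perm.sign (PA * bp y.1 y.2) : ℤ) : ℝ) * Psi H j k (PA * bp y.1 y.2)
        = -((if j = k then (1:ℝ) else 0) * Tpi H) := by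
    rintro ⟨α, β⟩
    rw [valA H h2 j k α β, sign_term, show Equiv.Perm.sign PA = -1 from by decide]
    have hα := sq_unit (Equiv.Perm.sign α)
    have hβ := sq_unit (Equiv.Perm.sign β)
    have expand : (((((-1 : ℤˣ) : ℤ) : ℝ)) * ((Equiv.Perm.sign α : ℤ) : ℝ) * ((Equiv.Perm.sign β : ℤ) : ℝ))
        * (((Equiv.Perm.sign α : ℤ) : ℝ) * ((Equiv.Perm.sign β : ℤ) : ℝ) * ((if j = k then (1:ℝ) else 0) * Tpi H))
        = -((((Equiv.Perm.sign α : ℤ) : ℝ) * ((Equiv.Perm.sign α : ℤ) : ℝ)) *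
            ((((Equiv.Perm.sign β : ℤ) : ℝ) * ((Equiv.Perm.sign β : ℤ) : ℝ)) *
              ((if j = k then (1:ℝ) else 0) * Tpi H))) := by
      push_cast
      ring
    rw [expand, hα, hβ]
    ring
  have hvalPos : ∀ (P : Perm ii), Equiv.Perm.sign P = 1 →
      (∀ (α β : Perm (Fin 3)), Psi H j k (P * bp α β)
        = ((Equiv.Perm.sign α : ℤ) : ℝ) * ((Equiv.Perm.sign β : ℤ) : ℝ) * Mpi H j k) →
      ∀ y : Perm (Fin 3) × Perm (Fin 3),
        ((Equiv.Perm.sign (P * bp y.1 y.2) : ℤ) : ℝ) * Psi H j k (P * bp y.1 y.2) = Mpi H j k := by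
    rintro P hP hval ⟨α, β⟩
    rw [hval α β, sign_term, hP]
    have hα := sq_unit (Equiv.Perm.sign α)
    have hβ := sq_unit (Equiv.Perm.sign β)
    have expand : ((((1 : ℤˣ) : ℤ) : ℝ) * ((Equiv.Perm.sign α : ℤ) : ℝ) * ((Equiv.Perm.sign β : ℤ) : ℝ))
        * (((Equiv.Perm.sign α : ℤ) : ℝ) * ((Equiv.Perm.sign β : ℤ) : ℝ) * Mpi H j k)
        = (((Equiv.Perm.sign α : ℤ) : ℝ) * ((Equiv.Perm.sign α : ℤ) : ℝ)) *
            ((((Equiv.Perm.sign β : ℤ) : ℝ) * ((Equiv.Perm.sign β : ℤ) : ℝ)) * Mpi H j k) := by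
      push_cast
      ring
    rw [expand, hα, hβ]
    ring
  have hvalNeg : ∀ (P : Perm ii), Equiv.Perm.sign P = -1 →
      (∀ (α β : Perm (Fin 3)), Psi H j k (P * bp α β)
        = -(((Equiv.Perm.sign α : ℤ) : ℝ) * ((Equiv.Perm.sign β : ℤ) : ℝ) * Mpi H j k)) →
      ∀ y : Perm (Fin 3) × Perm (Fin 3),
        ((Equiv.Perm.sign (P * bp y.1 y.2) : ℤ) : ℝ) * Psi H j k (P * bp y.1 y.2) = Mpi H j k := by
    rintro P hP hval ⟨α, β⟩
    rw [hval α β, sign_term, hP]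
    have hα := sq_unit (Equiv.Perm.sign α)
    have hβ := sq_unit (Equiv.Perm.sign β)
    have expand : ((((-1 : ℤˣ) : ℤ) : ℝ) * ((Equiv.Perm.sign α : ℤ) : ℝ) * ((Equiv.Perm.sign β : ℤ) : ℝ))
        * (-(((Equiv.Perm.sign α : ℤ) : ℝ) * ((Equiv.Perm.sign β : ℤ) : ℝ) * Mpi H j k))
        = (((Equiv.Perm.sign α : ℤ) : ℝ) * ((Equiv.Perm.sign α : ℤ) : ℝ)) *
            ((((Equiv.Perm.sign β : ℤ) : ℝ) * ((Equiv.Perm.sign β : ℤ) : ℝ)) * Mpi H j k) := by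
      push_cast
      ring
    rw [expand, hα, hβ]
    ring
  have hsplit : ∑ x : Fin 7 × Perm (Fin 3) × Perm (Fin 3),
      ((Equiv.Perm.sign (g x) : ℤ) : ℝ) * Psi H j k (g x)
      = ∑ s : Fin 7, ∑ y : Perm (Fin 3) × Perm (Fin 3),
          ((Equiv.Perm.sign (Plist s * bp y.1 y.2) : ℤ) : ℝ) * Psi H j k (Plist s * bp y.1 y.2) := by
    rw [Fintype.sum_prod_type]
  have hsumA : ∑ y : Perm (Fin 3) × Perm (Fin 3),
      ((Equiv.Perm.sign (PA * bp y.1 y.2) : ℤ) : ℝ) * Psi H j k (PA * bp y.1 y.2)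
      = -(36 * ((if j = k then (1:ℝ) else 0) * Tpi H)) := by
    rw [Finset.sum_congr rfl (fun y _ => hvalA y), Finset.sum_const, hcard, nsmul_eq_mul]
    push_cast
    ring
  have hsumM : ∀ (P : Perm ii),
      (∀ y : Perm (Fin 3) × Perm (Fin 3),
        ((Equiv.Perm.sign (P * bp y.1 y.2) : ℤ) : ℝ) * Psi H j k (P * bp y.1 y.2) = Mpi H j k) →
      ∑ y : Perm (Fin 3) × Perm (Fin 3),
        ((Equiv.Perm.sign (P * bp y.1 y.2) : ℤ) : ℝ) * Psi H j k (P * bp y.1 y.2)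
        = 36 * Mpi H j k := by
    intro P hv
    rw [Finset.sum_congr rfl (fun y _ => hv y), Finset.sum_const, hcard, nsmul_eq_mul]
    push_cast
    ring
  have e0 : Plist 0 = PA := rfl
  have e1 : Plist 1 = PB0 := rfl
  have e2 : Plist 2 = PB1 := rfl
  have e3 : Plist 3 = PB2 := rfl
  have e4 : Plist 4 = PC0 := rfl
  have e5 : Plist 5 = PC1 := rfl
  have e6 : Plist 6 = PC2 := rfl
  rw [hsplit] at himage
  rw [Fin.sum_univ_seven, e0, e1, e2, e3, e4, e5, e6] at himage
  rw [hsumA] at himage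
  rw [hsumM PB0 (hvalPos PB0 (by decide) (valB0 H h1 h2 j k))] at himage
  rw [hsumM PB1 (hvalNeg PB1 (by decide) (valB1 H h1 h2 j k))] at himage
  rw [hsumM PB2 (hvalPos PB2 (by decide) (valB2 H h1 h2 j k))] at himage
  rw [hsumM PC0 (hvalPos PC0 (by decide) (valC0 H h1 h2 j k))] at himage
  rw [hsumM PC1 (hvalNeg PC1 (by decide) (valC1 H h1 h2 j k))] at himage
  rw [hsumM PC2 (hvalPos PC2 (by decide) (valC2 H h1 h2 j k))] at himage
  rw [himage] at hsub
  rw [← hm] at hsub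
  -- hsub : 0 = -(36 * δT) + 36 M + 36 M + 36 M + 36 M + 36 M + 36 M
  linarith [hsub]

lemma pull_delta (k : Fin n) (G : Fin n → Fin n → Fin n → Fin n → ℝ) :
    ∑ c : Fin n, ∑ d : Fin n, ∑ e : Fin n, ∑ f : Fin n,
      (if c = k then (1:ℝ) else 0) * G c d e f
    = ∑ d : Fin n, ∑ e : Fin n, ∑ f : Fin n, G k d e f := by
  rw [Finset.sum_comm]
  refine Finset.sum_congr rfl fun d _ => ?_
  rw [Finset.sum_comm]
  refine Finset.sum_congr rfl fun e _ => ?_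
  rw [Finset.sum_comm]
  refine Finset.sum_congr rfl fun f _ => ?_
  simp only [ite_mul, one_mul, zero_mul, Finset.sum_ite_eq', Finset.mem_univ, if_true]

lemma bridgeT :
    Tpi H = ∑ a, ∑ b, ∑ c, ∑ d, ∑ e, ∑ f, H a b c d e f * H d e f a b c := by
  have v0 : ∀ x y z : Fin n, ![x,y,z] 0 = x := fun _ _ _ => rfl
  have v1 : ∀ x y z : Fin n, ![x,y,z] 1 = y := fun _ _ _ => rfl
  have v2 : ∀ x y z : Fin n, ![x,y,z] 2 = z := fun _ _ _ => rfl
  rw [Tpi, sum_pi3]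
  refine Finset.sum_congr rfl fun a _ => ?_
  refine Finset.sum_congr rfl fun b _ => ?_
  refine Finset.sum_congr rfl fun c _ => ?_
  rw [sum_pi3]
  refine Finset.sum_congr rfl fun d _ => ?_
  refine Finset.sum_congr rfl fun e _ => ?_
  refine Finset.sum_congr rfl fun f _ => ?_
  simp only [v0, v1, v2]

lemma bridgeM (j k : Fin n) :
    Mpi H j k = ∑ a, ∑ b, ∑ d, ∑ e, ∑ f, H a b k d e f * H d e f a b j := by
  have v0 : ∀ x y z : Fin n, ![x,y,z] 0 = x := fun _ _ _ => rfl
  have v1 : ∀ x y z : Fin n, ![x,y,z] 1 = y := fun _ _ _ => rfl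
  have v2 : ∀ x y z : Fin n, ![x,y,z] 2 = z := fun _ _ _ => rfl
  rw [Mpi, sum_pi3]
  refine Finset.sum_congr rfl fun a _ => ?_
  refine Finset.sum_congr rfl fun b _ => ?_
  rw [show (∑ c : Fin n, ∑ q : Fin 3 → Fin n,
      (if (![a,b,c] : Fin 3 → Fin n) 2 = k then (1:ℝ) else 0) *
        (H ((![a,b,c] : Fin 3 → Fin n) 0) ((![a,b,c] : Fin 3 → Fin n) 1) ((![a,b,c] : Fin 3 → Fin n) 2)
            (q 0) (q 1) (q 2) *
         H (q 0) (q 1) (q 2) ((![a,b,c] : Fin 3 → Fin n) 0) ((![a,b,c] : Fin 3 → Fin n) 1) j))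
      = ∑ c : Fin n, ∑ d : Fin n, ∑ e : Fin n, ∑ f : Fin n,
          (if c = k then (1:ℝ) else 0) * (H a b c d e f * H d e f a b j) from
    Finset.sum_congr rfl fun c _ => by
      rw [sum_pi3]
      refine Finset.sum_congr rfl fun d _ => ?_
      refine Finset.sum_congr rfl fun e _ => ?_
      refine Finset.sum_congr rfl fun f _ => ?_
      simp only [v0, v1, v2]]
  rw [pull_delta]

end withH

end LovelockAux

/-- Lovelock's identity `H_{abk}^{def} H_{def}^{abj} = (1/6) δ^j_k H_{abc}^{def} H_{def}^{abc}`
for trace-free double three-forms in six dimensions and lower. -/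
theorem lovelock_double_three_form {n : ℕ} (hn : n ≤ 6)
    (H : Fin n → Fin n → Fin n → Fin n → Fin n → Fin n → ℝ)
    (hAnti1 : ∀ (σ : Equiv.Perm (Fin 3)) (a b c d e f : Fin n),
      H (![a, b, c] (σ 0)) (![a, b, c] (σ 1)) (![a, b, c] (σ 2)) d e f
        = ((Equiv.Perm.sign σ : ℤ) : ℝ) * H a b c d e f)
    (hAnti2 : ∀ (σ : Equiv.Perm (Fin 3)) (a b c d e f : Fin n),
      H a b c (![d, e, f] (σ 0)) (![d, e, f] (σ 1)) (![d, e, f] (σ 2))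
        = ((Equiv.Perm.sign σ : ℤ) : ℝ) * H a b c d e f)
    (hTF : ∀ a b d e, ∑ i, H a b i d e i = 0)
    (j k : Fin n) :
    ∑ a, ∑ b, ∑ d, ∑ e, ∑ f, H a b k d e f * H d e f a b j =
      (if j = k then (1 : ℝ) else 0) * (1 / 6) *
        ∑ a, ∑ b, ∑ c, ∑ d, ∑ e, ∑ f, H a b c d e f * H d e f a b c := by
  have key := LovelockAux.key_eq H hAnti1 hAnti2 hTF hn j k
  rw [LovelockAux.bridgeM H j k, LovelockAux.bridgeT H] at key
  by_cases hjk : j = k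
  · rw [if_pos hjk] at key ⊢
    linarith
  · rw [if_neg hjk] at key ⊢
    linarith
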